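/- Let L be a finite-dimensional Lie algebra and let A/B and D/E be nonabelian chief factors of L that are L-equivalent but not L-isomorphic. Set X = C_L(A/B), Y = C_L(D/E), and I = I_L(A/B) = I_L(D/E). Then X ≠ Y, I = X + Y, X/(X ∩ Y) ≅_L D/E, and Y/(X ∩ Y) ≅_L A/B. -/

import Mathlib

/-- `A/B` is a chief factor of `L`. -/
def IsChiefFactor {K L : Type*} [Field K] [LieRing L] [LieAlgebra K L]
    (A B : LieIdeal K L) : Prop :=
  B < A ∧ ∀ C : LieIdeal K L, B ≤ C → C ≤ A → C = B ∨ C = A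

/-- `A/B ≅_L D/E`: an `L`-isomorphism between the factors, described via a map
on representatives. -/
def LIsoFactors (K : Type*) {L : Type*} [Field K] [LieRing L] [LieAlgebra K L]
    (A B D E : Set L) : Prop :=
  ∃ φ : L → L,
    (∀ a ∈ A, φ a ∈ D) ∧ (∀ a ∈ B, φ a ∈ E) ∧
    (∀ a ∈ A, ∀ b ∈ A, φ (a + b) - φ a - φ b ∈ E) ∧
    (∀ (k : K), ∀ a ∈ A, φ (k • a) - k • φ a ∈ E) ∧
    (∀ a ∈ A, φ a ∈ E → a ∈ B) ∧
    (∀ d ∈ D, ∃ a ∈ A, φ a - d ∈ E) ∧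
    (∀ a ∈ A, ∀ b ∈ A, φ ⁅a, b⁆ - ⁅φ a, φ b⁆ ∈ E) ∧
    (∀ x : L, ∀ a ∈ A, φ ⁅x, a⁆ - ⁅x, φ a⁆ ∈ E)

/-- `A/B ∼_L D/E`: `L`-equivalence, i.e. a 1-cocycle `β ∈ Z¹(L, D/E)` and an
`L`-isomorphism `φ : A/B → (D/E)_β`, described via representatives. -/
def LEquivFactors (K : Type*) {L : Type*} [Field K] [LieRing L] [LieAlgebra K L]
    (A B D E : Set L) : Prop :=
  ∃ φ β : L → L,
    (∀ a ∈ A, φ a ∈ D) ∧ (∀ a ∈ B, φ a ∈ E) ∧ (∀ x : L, β x ∈ D) ∧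
    (∀ a ∈ A, ∀ b ∈ A, φ (a + b) - φ a - φ b ∈ E) ∧
    (∀ (k : K), ∀ a ∈ A, φ (k • a) - k • φ a ∈ E) ∧
    (∀ a ∈ A, φ a ∈ E → a ∈ B) ∧
    (∀ d ∈ D, ∃ a ∈ A, φ a - d ∈ E) ∧
    (∀ a ∈ A, ∀ b ∈ A, φ ⁅a, b⁆ - ⁅φ a, φ b⁆ ∈ E) ∧
    (∀ x y : L, β ⁅x, y⁆ - (⁅x, β y⁆ - ⁅y, β x⁆ + ⁅β x, β y⁆) ∈ E) ∧
    (∀ x : L, ∀ a ∈ A, φ ⁅x, a⁆ - (⁅β x, φ a⁆ + ⁅x, φ a⁆) ∈ E)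

section AuxChief

variable {K L : Type*} [Field K] [LieRing L] [LieAlgebra K L]

/-- The centralizer `C_L(A/B)` of a factor, as a Lie ideal. -/
def centIdeal (A B : LieIdeal K L) : LieIdeal K L where
  carrier := {x : L | ∀ a ∈ A, ⁅x, a⁆ ∈ B}
  add_mem' := by
    intro x y hx hy a ha
    rw [add_lie]
    exact add_mem (hx a ha) (hy a ha)
  zero_mem' := by
    intro a ha
    rw [zero_lie]
    exact zero_mem _
  smul_mem' := by
    intro k x hx a ha
    rw [smul_lie]
    exact SMulMemClass.smul_mem k (hx a ha)
  lie_mem := by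
    intro x m hm a ha
    have h : ⁅⁅x, m⁆, a⁆ = ⁅x, ⁅m, a⁆⁆ - ⁅m, ⁅x, a⁆⁆ := by
      rw [leibniz_lie]; abel
    rw [h]
    exact sub_mem (B.lie_mem (hm a ha)) (hm _ (A.lie_mem ha))

lemma mem_centIdeal {A B : LieIdeal K L} {x : L} :
    x ∈ centIdeal A B ↔ ∀ a ∈ A, ⁅x, a⁆ ∈ B := Iff.rfl

lemma coe_centIdeal (A B : LieIdeal K L) :
    ((centIdeal A B : LieIdeal K L) : Set L) = {x : L | ∀ a ∈ A, ⁅x, a⁆ ∈ B} := rfl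

/-- The projection construction: if `S ≤ P ⊔ Q` with `P ⊓ Q = W`, projecting onto
the `P`-component gives an `L`-isomorphism of factors `S/T ≅ P/W` under suitable
compatibility hypotheses. -/
lemma projIso (P Q S T W : LieIdeal K L)
    (hSPQ : S ≤ P ⊔ Q) (hPQW : P ⊓ Q = W) (hTS : T ≤ S) (hTQ : T ≤ Q)
    (hWQ : W ≤ Q) (hSQT : S ⊓ Q ≤ T) (hPSQ : P ≤ S ⊔ Q) :
    LIsoFactors K (S : Set L) (T : Set L) (P : Set L) (W : Set L) := by
  classical
  have hdec : ∀ l : L, ∃ p : L, l ∈ P ⊔ Q → p ∈ P ∧ l - p ∈ Q := by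
    intro l
    by_cases h : l ∈ P ⊔ Q
    · obtain ⟨p, hp, q, hq, hpq⟩ := (LieSubmodule.mem_sup (N := P) Q l).mp h
      refine ⟨p, fun _ => ⟨hp, ?_⟩⟩
      have : l - p = q := by rw [← hpq]; abel
      rw [this]; exact hq
    · exact ⟨0, fun h' => absurd h' h⟩
  choose ψ hψ using hdec
  have hP : ∀ l ∈ P ⊔ Q, ψ l ∈ P := fun l hl => (hψ l hl).1
  have hQ : ∀ l ∈ P ⊔ Q, l - ψ l ∈ Q := fun l hl => (hψ l hl).2
  have hW : ∀ v : L, v ∈ P → v ∈ Q → v ∈ W := by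
    intro v h1 h2
    have : v ∈ P ⊓ Q := (LieSubmodule.mem_inf (N := P) Q v).mpr ⟨h1, h2⟩
    rwa [hPQW] at this
  refine ⟨ψ, ?_, ?_, ?_, ?_, ?_, ?_, ?_, ?_⟩
  · exact fun a ha => hP a (hSPQ ha)
  · intro a ha
    have haS : a ∈ P ⊔ Q := hSPQ (hTS ha)
    refine hW _ (hP a haS) ?_
    have h : ψ a = a - (a - ψ a) := by abel
    rw [h]
    exact sub_mem (hTQ ha) (hQ _ haS)
  · intro a ha b hb
    have ha' : a ∈ P ⊔ Q := hSPQ ha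
    have hb' : b ∈ P ⊔ Q := hSPQ hb
    have hab : a + b ∈ P ⊔ Q := add_mem ha' hb'
    refine hW _ (sub_mem (sub_mem (hP _ hab) (hP _ ha')) (hP _ hb')) ?_
    have h : ψ (a + b) - ψ a - ψ b
        = (a - ψ a) + (b - ψ b) - ((a + b) - ψ (a + b)) := by abel
    rw [h]
    exact sub_mem (add_mem (hQ _ ha') (hQ _ hb')) (hQ _ hab)
  · intro k a ha
    have ha' : a ∈ P ⊔ Q := hSPQ ha
    have hka : k • a ∈ P ⊔ Q := SMulMemClass.smul_mem k ha'
    refine hW _ (sub_mem (hP _ hka) (SMulMemClass.smul_mem k (hP _ ha'))) ?_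
    have h : ψ (k • a) - k • ψ a
        = k • (a - ψ a) - ((k • a) - ψ (k • a)) := by
      rw [smul_sub]; abel
    rw [h]
    exact sub_mem (SMulMemClass.smul_mem k (hQ _ ha')) (hQ _ hka)
  · intro a ha hWa
    have ha' : a ∈ P ⊔ Q := hSPQ ha
    have haQ : a ∈ Q := by
      have h : a = ψ a + (a - ψ a) := by abel
      rw [h]
      exact add_mem (hWQ hWa) (hQ _ ha')
    exact hSQT ((LieSubmodule.mem_inf (N := S) Q a).mpr ⟨ha, haQ⟩)
  · intro d hd
    obtain ⟨s, hs, q, hq, hsq⟩ := (LieSubmodule.mem_sup (N := S) Q d).mp (hPSQ hd)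
    refine ⟨s, hs, ?_⟩
    have hs' : s ∈ P ⊔ Q := hSPQ hs
    refine hW _ (sub_mem (hP _ hs') hd) ?_
    have h : ψ s - d = -((s - ψ s) + q) := by rw [← hsq]; abel
    rw [h]
    exact neg_mem (add_mem (hQ _ hs') hq)
  · intro a ha b hb
    have ha' : a ∈ P ⊔ Q := hSPQ ha
    have hb' : b ∈ P ⊔ Q := hSPQ hb
    have habS : ⁅a, b⁆ ∈ S := S.lie_mem hb
    have hab : ⁅a, b⁆ ∈ P ⊔ Q := hSPQ habS
    refine hW _ (sub_mem (hP _ hab) (P.lie_mem (hP _ hb'))) ?_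
    have h : ψ ⁅a, b⁆ - ⁅ψ a, ψ b⁆
        = (⁅a - ψ a, b⁆ + ⁅ψ a, b - ψ b⁆) - (⁅a, b⁆ - ψ ⁅a, b⁆) := by
      rw [sub_lie, lie_sub]; abel
    rw [h]
    refine sub_mem (add_mem ?_ (Q.lie_mem (hQ _ hb'))) (hQ _ hab)
    rw [← lie_skew]
    exact neg_mem (Q.lie_mem (hQ _ ha'))
  · intro x a ha
    have ha' : a ∈ P ⊔ Q := hSPQ ha
    have hxaS : ⁅x, a⁆ ∈ S := S.lie_mem ha
    have hxa : ⁅x, a⁆ ∈ P ⊔ Q := hSPQ hxaS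
    refine hW _ (sub_mem (hP _ hxa) (P.lie_mem (hP _ ha'))) ?_
    have h : ψ ⁅x, a⁆ - ⁅x, ψ a⁆
        = ⁅x, a - ψ a⁆ - (⁅x, a⁆ - ψ ⁅x, a⁆) := by
      rw [lie_sub]; abel
    rw [h]
    exact sub_mem (Q.lie_mem (hQ _ ha')) (hQ _ hxa)

end AuxChief

/-- Let `A/B` and `D/E` be nonabelian chief factors of `L` that are
`L`-equivalent but not `L`-isomorphic, and set `X = C_L(A/B)`, `Y = C_L(D/E)`
and `I = I_L(A/B) = I_L(D/E)`.  Then `X ≠ Y`, `I = X + Y`,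
`X/(X ∩ Y) ≅_L D/E` and `Y/(X ∩ Y) ≅_L A/B`. -/
theorem stmt9 {K L : Type*} [Field K] [LieRing L] [LieAlgebra K L]
    [FiniteDimensional K L]
    (A B D E : LieIdeal K L) (hBA : B ≤ A) (hED : E ≤ D)
    (hchief₁ : IsChiefFactor A B) (hchief₂ : IsChiefFactor D E)
    (hnonab₁ : ∃ a ∈ A, ∃ b ∈ A, ⁅a, b⁆ ∉ B)
    (hnonab₂ : ∃ a ∈ D, ∃ b ∈ D, ⁅a, b⁆ ∉ E)
    (hequiv : LEquivFactors K (A : Set L) (B : Set L) (D : Set L) (E : Set L))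
    (hniso : ¬ LIsoFactors K (A : Set L) (B : Set L) (D : Set L) (E : Set L)) :
    {x : L | ∀ a ∈ A, ⁅x, a⁆ ∈ B} ≠ {x : L | ∀ d ∈ D, ⁅x, d⁆ ∈ E} ∧
      -- `I_L(A/B) = I_L(D/E)`
      {x : L | ∃ a ∈ A, ∀ c ∈ A, ⁅x, c⁆ - ⁅a, c⁆ ∈ B} =
        {x : L | ∃ d ∈ D, ∀ c ∈ D, ⁅x, c⁆ - ⁅d, c⁆ ∈ E} ∧
      -- `I = X + Y`
      {x : L | ∃ a ∈ A, ∀ c ∈ A, ⁅x, c⁆ - ⁅a, c⁆ ∈ B} =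
        {x : L | ∃ u ∈ {z : L | ∀ a ∈ A, ⁅z, a⁆ ∈ B},
          ∃ v ∈ {z : L | ∀ d ∈ D, ⁅z, d⁆ ∈ E}, x = u + v} ∧
      -- `X/(X ∩ Y) ≅_L D/E`
      LIsoFactors K {z : L | ∀ a ∈ A, ⁅z, a⁆ ∈ B}
        ({z : L | ∀ a ∈ A, ⁅z, a⁆ ∈ B} ∩ {z : L | ∀ d ∈ D, ⁅z, d⁆ ∈ E})
        (D : Set L) (E : Set L) ∧
      -- `Y/(X ∩ Y) ≅_L A/B`
      LIsoFactors K {z : L | ∀ d ∈ D, ⁅z, d⁆ ∈ E}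
        ({z : L | ∀ a ∈ A, ⁅z, a⁆ ∈ B} ∩ {z : L | ∀ d ∈ D, ⁅z, d⁆ ∈ E})
        (A : Set L) (B : Set L) := by
  classical
  obtain ⟨φ, β, hφD, hφBE, hβD, hadd, hsmul, hinj, hsurj, hmul, hcocy, hact⟩ := hequiv
  set X : LieIdeal K L := centIdeal A B with hXdef
  set Y : LieIdeal K L := centIdeal D E with hYdef
  -- a vector whose bracket with every `φ a` lies in `E` centralizes `D/E`
  have hext : ∀ v : L, (∀ a ∈ (A : Set L), ⁅v, φ a⁆ ∈ E) → v ∈ Y := by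
    intro v hv d hd
    obtain ⟨a, ha, hfd⟩ := hsurj d hd
    have h : ⁅v, d⁆ = ⁅v, φ a⁆ - ⁅v, φ a - d⁆ := by rw [lie_sub]; abel
    rw [h]
    exact sub_mem (hv a ha) (E.lie_mem hfd)
  -- X ≤ D ⊔ Y
  have hXDY : X ≤ D ⊔ Y := by
    intro x hx
    have hy : x + β x ∈ Y := by
      apply hext
      intro a ha
      have h1 := hact x a ha
      have h2 : φ ⁅x, a⁆ ∈ E := hφBE _ (hx a ha)
      have h : ⁅x + β x, φ a⁆
          = φ ⁅x, a⁆ - (φ ⁅x, a⁆ - (⁅β x, φ a⁆ + ⁅x, φ a⁆)) := by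
        rw [add_lie]; abel
      rw [h]
      exact sub_mem h2 h1
    rw [LieSubmodule.mem_sup]
    exact ⟨-β x, neg_mem (hβD x), x + β x, hy, by abel⟩
  -- A ≤ D ⊔ Y
  have hADY : A ≤ D ⊔ Y := by
    intro a ha
    have hy : β a + a - φ a ∈ Y := by
      apply hext
      intro c hc
      have h1 := hmul a ha c hc
      have h2 := hact a c hc
      have h : ⁅β a + a - φ a, φ c⁆
          = (φ ⁅a, c⁆ - ⁅φ a, φ c⁆) - (φ ⁅a, c⁆ - (⁅β a, φ c⁆ + ⁅a, φ c⁆)) := by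
        rw [sub_lie, add_lie]; abel
      rw [h]
      exact sub_mem h1 h2
    rw [LieSubmodule.mem_sup]
    exact ⟨φ a - β a, sub_mem (hφD a ha) (hβD a), β a + a - φ a, hy, by abel⟩
  -- key lemma for the reverse inclusions
  have hkey : ∀ z w : L, w ∈ D → (∀ a ∈ (A : Set L), φ ⁅z, a⁆ - ⁅w, φ a⁆ ∈ E) →
      z ∈ A ⊔ X := by
    intro z w hw hzw
    obtain ⟨a', ha', hfa'⟩ := hsurj w hw
    have hx : z - a' ∈ X := by
      intro a ha
      have hza : ⁅z, a⁆ ∈ A := A.lie_mem ha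
      have haa : ⁅a', a⁆ ∈ A := A.lie_mem ha
      have hu : ⁅z, a⁆ - ⁅a', a⁆ ∈ A := sub_mem hza haa
      have h1 := hadd _ hu _ haa
      have hsum : (⁅z, a⁆ - ⁅a', a⁆) + ⁅a', a⁆ = ⁅z, a⁆ := by abel
      rw [hsum] at h1
      have h2 := hzw a ha
      have hE : w - φ a' ∈ E := by
        have h := neg_mem hfa'
        rwa [neg_sub] at h
      have h3 : ⁅w - φ a', φ a⁆ ∈ E := by
        rw [← lie_skew]
        exact neg_mem (E.lie_mem hE)
      have h4 := hmul a' ha' a ha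
      have hφu : φ (⁅z, a⁆ - ⁅a', a⁆) ∈ E := by
        have h : φ (⁅z, a⁆ - ⁅a', a⁆)
            = -(φ ⁅z, a⁆ - φ (⁅z, a⁆ - ⁅a', a⁆) - φ ⁅a', a⁆)
              + (φ ⁅z, a⁆ - ⁅w, φ a⁆) + ⁅w - φ a', φ a⁆
              - (φ ⁅a', a⁆ - ⁅φ a', φ a⁆) := by
          rw [sub_lie]; abel
        rw [h]
        exact sub_mem (add_mem (add_mem (neg_mem h1) h2) h3) h4
      have hB : ⁅z, a⁆ - ⁅a', a⁆ ∈ B := hinj _ hu hφu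
      have h : ⁅z - a', a⁆ = ⁅z, a⁆ - ⁅a', a⁆ := sub_lie _ _ _
      rw [h]
      exact hB
    rw [LieSubmodule.mem_sup]
    exact ⟨a', ha', z - a', hx, by abel⟩
  -- D ≤ A ⊔ X
  have hDAX : D ≤ A ⊔ X := by
    intro d hd
    apply hkey d (β d + d) (add_mem (hβD d) hd)
    intro a ha
    have h1 := hact d a ha
    have h : φ ⁅d, a⁆ - ⁅β d + d, φ a⁆
        = φ ⁅d, a⁆ - (⁅β d, φ a⁆ + ⁅d, φ a⁆) := by
      rw [add_lie]
    rw [h]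
    exact h1
  -- Y ≤ A ⊔ X
  have hYAX : Y ≤ A ⊔ X := by
    intro y hy
    apply hkey y (β y) (hβD y)
    intro a ha
    have h1 := hact y a ha
    have h2 : ⁅y, φ a⁆ ∈ E := hy _ (hφD a ha)
    have h : φ ⁅y, a⁆ - ⁅β y, φ a⁆
        = (φ ⁅y, a⁆ - (⁅β y, φ a⁆ + ⁅y, φ a⁆)) + ⁅y, φ a⁆ := by abel
    rw [h]
    exact add_mem h1 h2
  -- B ≤ X and E ≤ Y
  have hBX : B ≤ X := by
    intro b hb a ha
    rw [← lie_skew]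
    exact neg_mem (B.lie_mem hb)
  have hEY : E ≤ Y := by
    intro e he d hd
    rw [← lie_skew]
    exact neg_mem (E.lie_mem he)
  -- A ⊓ X = B
  have hAXB : A ⊓ X = B := by
    rcases hchief₁.2 (A ⊓ X) (le_inf hBA hBX) inf_le_left with h | h
    · exact h
    · exfalso
      obtain ⟨a, ha, b, hb, hab⟩ := hnonab₁
      have hAX : A ≤ X := by
        intro x hx
        have hxx : x ∈ A ⊓ X := (le_of_eq h.symm) hx
        exact ((LieSubmodule.mem_inf (N := A) X x).mp hxx).2
      exact hab (hAX ha b hb)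
  -- D ⊓ Y = E
  have hDYE : D ⊓ Y = E := by
    rcases hchief₂.2 (D ⊓ Y) (le_inf hED hEY) inf_le_left with h | h
    · exact h
    · exfalso
      obtain ⟨d, hd, e, he, hde⟩ := hnonab₂
      have hDY : D ≤ Y := by
        intro x hx
        have hxx : x ∈ D ⊓ Y := (le_of_eq h.symm) hx
        exact ((LieSubmodule.mem_inf (N := D) Y x).mp hxx).2
      exact hde (hDY hd e he)
  -- the common ideal `I`
  have hII : A ⊔ X = D ⊔ Y := le_antisymm (sup_le hADY hXDY) (sup_le hDAX hYAX)
  -- X = Y leads to an L-isomorphism, contradiction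
  have hXneY : X ≠ Y := by
    intro hXY
    apply hniso
    refine projIso D X A B E ?_ ?_ hBA hBX ?_ (le_of_eq hAXB) hDAX
    · rw [hXY]; exact hADY
    · rw [hXY]; exact hDYE
    · rw [hXY]; exact hEY
  -- X ⊔ Y = I
  have hXYI : X ⊔ Y = A ⊔ X := by
    rcases hchief₂.2 ((X ⊔ Y) ⊓ D) (le_inf (le_trans hEY le_sup_right) hED)
        inf_le_right with h | h
    · rcases hchief₁.2 ((X ⊔ Y) ⊓ A) (le_inf (le_trans hBX le_sup_left) hBA)
          inf_le_right with h' | h'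
      · exfalso
        apply hXneY
        have hXsubY : X ≤ Y := by
          intro x hx
          have hxI : x ∈ D ⊔ Y := hXDY hx
          rw [LieSubmodule.mem_sup] at hxI
          obtain ⟨d, hd, y, hy, hdy⟩ := hxI
          have hdE : d ∈ E := by
            apply (le_of_eq h)
            refine (LieSubmodule.mem_inf (N := X ⊔ Y) D d).mpr ⟨?_, hd⟩
            have hdxy : d = x - y := by rw [← hdy]; abel
            rw [hdxy]
            exact sub_mem (le_sup_left (a := X) (b := Y) hx)
              (le_sup_right (a := X) (b := Y) hy)
          have hxdy : x = d + y := hdy.symm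
          rw [hxdy]
          exact add_mem (hEY hdE) hy
        have hYsubX : Y ≤ X := by
          intro y hy
          have hyI : y ∈ A ⊔ X := hYAX hy
          rw [LieSubmodule.mem_sup] at hyI
          obtain ⟨a, haA, u, hu, hau⟩ := hyI
          have haB : a ∈ B := by
            apply (le_of_eq h')
            refine (LieSubmodule.mem_inf (N := X ⊔ Y) A a).mpr ⟨?_, haA⟩
            have hayu : a = y - u := by rw [← hau]; abel
            rw [hayu]
            exact sub_mem (le_sup_right (a := X) (b := Y) hy)
              (le_sup_left (a := X) (b := Y) hu)
          have hyau : y = a + u := hau.symm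
          rw [hyau]
          exact add_mem (hBX haB) hu
        exact le_antisymm hXsubY hYsubX
      · have hA : A ≤ X ⊔ Y := by
          intro a ha
          have : a ∈ (X ⊔ Y) ⊓ A := (le_of_eq h'.symm) ha
          exact ((LieSubmodule.mem_inf (N := X ⊔ Y) A a).mp this).1
        exact le_antisymm (sup_le le_sup_right hYAX) (sup_le hA le_sup_left)
    · have hD : D ≤ X ⊔ Y := by
        intro d hd
        have : d ∈ (X ⊔ Y) ⊓ D := (le_of_eq h.symm) hd
        exact ((LieSubmodule.mem_inf (N := X ⊔ Y) D d).mp this).1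
      refine le_antisymm (sup_le le_sup_right hYAX) ?_
      rw [hII]
      exact sup_le hD le_sup_right
  -- descriptions of the set-level objects
  have hIA : {x : L | ∃ a ∈ A, ∀ c ∈ A, ⁅x, c⁆ - ⁅a, c⁆ ∈ B}
      = ((A ⊔ X : LieIdeal K L) : Set L) := by
    ext x
    simp only [Set.mem_setOf_eq, SetLike.mem_coe, LieSubmodule.mem_sup]
    constructor
    · rintro ⟨a, ha, hc⟩
      refine ⟨a, ha, x - a, ?_, by abel⟩
      intro c hcA
      rw [sub_lie]
      exact hc c hcA
    · rintro ⟨a, ha, u, hu, hau⟩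
      refine ⟨a, ha, fun c hc => ?_⟩
      have h : ⁅x, c⁆ - ⁅a, c⁆ = ⁅u, c⁆ := by rw [← hau, add_lie]; abel
      rw [h]
      exact hu c hc
  have hID : {x : L | ∃ d ∈ D, ∀ c ∈ D, ⁅x, c⁆ - ⁅d, c⁆ ∈ E}
      = ((D ⊔ Y : LieIdeal K L) : Set L) := by
    ext x
    simp only [Set.mem_setOf_eq, SetLike.mem_coe, LieSubmodule.mem_sup]
    constructor
    · rintro ⟨d, hd, hc⟩
      refine ⟨d, hd, x - d, ?_, by abel⟩
      intro c hcD
      rw [sub_lie]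
      exact hc c hcD
    · rintro ⟨d, hd, u, hu, hdu⟩
      refine ⟨d, hd, fun c hc => ?_⟩
      have h : ⁅x, c⁆ - ⁅d, c⁆ = ⁅u, c⁆ := by rw [← hdu, add_lie]; abel
      rw [h]
      exact hu c hc
  have hXset : ((X : LieIdeal K L) : Set L) = {x : L | ∀ a ∈ A, ⁅x, a⁆ ∈ B} := rfl
  have hYset : ((Y : LieIdeal K L) : Set L) = {x : L | ∀ d ∈ D, ⁅x, d⁆ ∈ E} := rfl
  have hXYinter : ((X ⊓ Y : LieIdeal K L) : Set L)
      = {z : L | ∀ a ∈ A, ⁅z, a⁆ ∈ B} ∩ {z : L | ∀ d ∈ D, ⁅z, d⁆ ∈ E} := by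
    rw [LieSubmodule.coe_inf, hXset, hYset]
  refine ⟨?_, ?_, ?_, ?_, ?_⟩
  · -- X ≠ Y as sets
    intro hset
    apply hXneY
    apply SetLike.ext'
    rw [hXset, hYset]
    exact hset
  · -- I_L(A/B) = I_L(D/E)
    rw [hIA, hID, hII]
  · -- I = X + Y
    rw [hIA]
    have hsum : {x : L | ∃ u ∈ {z : L | ∀ a ∈ A, ⁅z, a⁆ ∈ B},
        ∃ v ∈ {z : L | ∀ d ∈ D, ⁅z, d⁆ ∈ E}, x = u + v}
        = ((X ⊔ Y : LieIdeal K L) : Set L) := by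
      ext x
      simp only [Set.mem_setOf_eq, SetLike.mem_coe, LieSubmodule.mem_sup]
      constructor
      · rintro ⟨u, hu, v, hv, rfl⟩
        exact ⟨u, hu, v, hv, rfl⟩
      · rintro ⟨u, hu, v, hv, h⟩
        exact ⟨u, hu, v, hv, h.symm⟩
    rw [hsum, hXYI]
  · -- X/(X ∩ Y) ≅_L D/E
    have h4 := projIso D Y X (X ⊓ Y) E hXDY hDYE inf_le_left inf_le_right hEY
      le_rfl (by rw [hXYI]; exact hDAX)
    rw [hXset, hXYinter] at h4
    exact h4
  · -- Y/(X ∩ Y) ≅_L A/B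
    have h5 := projIso A X Y (X ⊓ Y) B hYAX hAXB inf_le_right inf_le_left hBX
      (le_inf inf_le_right inf_le_left)
      (by rw [sup_comm Y X, hXYI]; exact le_sup_left)
    rw [hYset, hXYinter] at h5
    exact h5
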